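/- Let Φ be an irreducible root system with base Δ and highest root θ = Σ_i c_i Δ_i, where the Coxeter labels c_i are positive integers. Let S ⊆ Δ and define the level of a root α = Σ a_i Δ_i with respect to S as lev(α) = Σ_{Δ_i ∉ S} a_i. If every root has level in {−1, 0, 1}, then exactly one simple root lies outside S, and its Coxeter label equals 1. -/

import Mathlib

/-- A reduced crystallographic root system `Φ` in a real inner product space `V`,
together with a fixed base `Δ` of simple roots. -/
structure RootSystemWithBase (V : Type*) [NormedAddCommGroup V] [InnerProductSpace ℝ V] where
  Φ : Set V
  Δ : Finset V
  finite : Φ.Finite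
  base_sub : ↑Δ ⊆ Φ
  ne_zero : ∀ α ∈ Φ, α ≠ 0
  reduced : ∀ α ∈ Φ, ∀ t : ℝ, t • α ∈ Φ → t = 1 ∨ t = -1
  reflect : ∀ α ∈ Φ, ∀ β ∈ Φ,
    β - (2 * (inner ℝ β α : ℝ) / (inner ℝ α α : ℝ)) • α ∈ Φ
  crystal : ∀ α ∈ Φ, ∀ β ∈ Φ, ∃ n : ℤ, (2 * (inner ℝ β α : ℝ) / (inner ℝ α α : ℝ)) = n
  base_indep : LinearIndependent ℝ (fun s : {x // x ∈ Δ} => (s : V))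
  base_expand : ∀ α ∈ Φ, ∃ c : V → ℤ,
    α = ∑ s ∈ Δ, (c s : ℝ) • s ∧ ((∀ s ∈ Δ, 0 ≤ c s) ∨ (∀ s ∈ Δ, c s ≤ 0))

variable {V : Type*} [NormedAddCommGroup V] [InnerProductSpace ℝ V]

/-- A positive root: a root whose coefficients with respect to the base are non-negative. -/
def RootSystemWithBase.IsPositiveRoot (R : RootSystemWithBase V) (α : V) : Prop :=
  α ∈ R.Φ ∧ ∃ c : V → ℤ, α = ∑ s ∈ R.Δ, (c s : ℝ) • s ∧ ∀ s ∈ R.Δ, 0 ≤ c s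

/-- Let `θ = ∑ c s • s` be the highest root of an irreducible root system,
with positive Coxeter labels `c`, and let `S ⊂ Δ`. If every root has level (sum of its
coefficients at the simple roots outside `S`) in `{-1, 0, 1}`, then exactly one simple
root lies outside `S` and its Coxeter label is `1`. -/
theorem unique_simple_root_outside_with_coxeter_label_one [DecidableEq V]
    (R : RootSystemWithBase V) (θ : V) (c : V → ℤ) (coeff : V → V → ℤ) (S : Finset V)
    (hθ : θ ∈ R.Φ)
    (hθc : θ = ∑ s ∈ R.Δ, (c s : ℝ) • s)
    (hcpos : ∀ s ∈ R.Δ, 0 < c s)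
    (hcoeff : ∀ α ∈ R.Φ, α = ∑ s ∈ R.Δ, (coeff α s : ℝ) • s)
    (hhighest : ∀ α ∈ R.Φ, ∀ s ∈ R.Δ, coeff α s ≤ c s)
    (hS : S ⊂ R.Δ)
    (hlev : ∀ α ∈ R.Φ, (∑ s ∈ R.Δ \ S, coeff α s) ∈ ({-1, 0, 1} : Set ℤ)) :
    ∃ s ∈ R.Δ, s ∉ S ∧ c s = 1 ∧ ∀ t ∈ R.Δ, t ∉ S → t = s := by
  -- coefficients of θ agree with c on Δ
  have hceq : ∀ s ∈ R.Δ, coeff θ s = c s := by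
    have hsum : ∑ s ∈ R.Δ, ((c s - coeff θ s : ℤ) : ℝ) • s = 0 := by
      have h1 := hθc
      have h2 := hcoeff θ hθ
      push_cast
      simp only [sub_smul, Finset.sum_sub_distrib, ← h1, ← h2, sub_self]
    have hli := Fintype.linearIndependent_iff.mp R.base_indep
      (fun s : {x // x ∈ R.Δ} => ((c s - coeff θ s : ℤ) : ℝ))
    have hsum' : ∑ s : {x // x ∈ R.Δ}, ((c s - coeff θ s : ℤ) : ℝ) • (s : V) = 0 := by
      rw [← Finset.sum_attach R.Δ (fun s => ((c s - coeff θ s : ℤ) : ℝ) • s)] at hsum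
      exact hsum
    intro s hs
    have := hli hsum' ⟨s, hs⟩
    have : ((c s - coeff θ s : ℤ) : ℝ) = 0 := this
    have : (c s - coeff θ s : ℤ) = 0 := by exact_mod_cast this
    omega
  have hlevθ := hlev θ hθ
  have hsum_eq : ∑ s ∈ R.Δ \ S, coeff θ s = ∑ s ∈ R.Δ \ S, c s := by
    refine Finset.sum_congr rfl fun s hs => hceq s (Finset.mem_sdiff.mp hs).1
  rw [hsum_eq] at hlevθ
  -- Δ \ S is nonempty
  obtain ⟨x, hxΔ, hxS⟩ := Finset.exists_of_ssubset hS
  have hne : (R.Δ \ S).Nonempty := ⟨x, Finset.mem_sdiff.mpr ⟨hxΔ, hxS⟩⟩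
  have hcard : (R.Δ \ S).card ≤ ∑ s ∈ R.Δ \ S, c s := by
    calc ((R.Δ \ S).card : ℤ) = ∑ _s ∈ R.Δ \ S, 1 := by simp
    _ ≤ ∑ s ∈ R.Δ \ S, c s := Finset.sum_le_sum fun s hs =>
        hcpos s (Finset.mem_sdiff.mp hs).1
  simp only [Set.mem_insert_iff, Set.mem_singleton_iff] at hlevθ
  have hle1 : ∑ s ∈ R.Δ \ S, c s ≤ 1 := by
    rcases hlevθ with h | h | h <;> omega
  have hcard1 : (R.Δ \ S).card = 1 := by
    have h1 : 1 ≤ (R.Δ \ S).card := Finset.card_pos.mpr hne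
    omega
  obtain ⟨s, hsing⟩ := Finset.card_eq_one.mp hcard1
  have hsmem : s ∈ R.Δ \ S := by rw [hsing]; exact Finset.mem_singleton_self s
  obtain ⟨hsΔ, hsS⟩ := Finset.mem_sdiff.mp hsmem
  have hcs : c s = 1 := by
    have : ∑ t ∈ R.Δ \ S, c t = c s := by rw [hsing, Finset.sum_singleton]
    have hpos := hcpos s hsΔ
    omega
  exact ⟨s, hsΔ, hsS, hcs, fun t htΔ htS => by
    have : t ∈ R.Δ \ S := Finset.mem_sdiff.mpr ⟨htΔ, htS⟩
    rw [hsing] at this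
    exact Finset.mem_singleton.mp this⟩
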